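/- If (λ_n)_{n≥1} is a sequence of positive reals with λ_{2k-1} = c·(k − 3/4)^{2/3}·(1 + ε_k) and λ_{2k} = c·(k − 1/4)^{2/3}·(1 + δ_k) where c = (3π/2)^{2/3} and ε_k, δ_k → 0, then t^{3/2} · ∑_{n=1}^∞ e^{−λ_n t} → 1/√π as t → 0⁺. -/

import Mathlib

open Real Filter Set
open MeasureTheory

noncomputable def gg (b x : ℝ) : ℝ := Real.exp (-(b * x ^ ((2:ℝ)/3)))

lemma gg_cont (b : ℝ) : Continuous (gg b) := by
  have h : Continuous fun x : ℝ => x ^ ((2:ℝ)/3) := by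
    rw [continuous_iff_continuousAt]
    intro x
    exact Real.continuousAt_rpow_const x _ (Or.inr (by norm_num))
  exact Real.continuous_exp.comp (continuous_const.mul h).neg

lemma gg_anti {b : ℝ} (hb : 0 < b) : AntitoneOn (gg b) (Ici 0) := by
  intro x hx y _ hxy
  exact Real.exp_le_exp.2 (neg_le_neg
    (mul_le_mul_of_nonneg_left (Real.rpow_le_rpow hx hxy (by norm_num)) hb.le))

lemma gg_nonneg (b x : ℝ) : 0 ≤ gg b x := (Real.exp_pos _).le

lemma gg_le_one {b x : ℝ} (hb : 0 ≤ b) (hx : 0 ≤ x) : gg b x ≤ 1 := by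
  rw [gg, Real.exp_le_one_iff, neg_nonpos]
  positivity

lemma gg_integrable {b : ℝ} (hb : 0 < b) : IntegrableOn (gg b) (Ioi 0) := by
  have h1 : IntegrableOn (gg b) (Ioc 0 1) := (gg_cont b).integrableOn_Ioc
  have h2 : IntegrableOn (gg b) (Ioi 1) := by
    have hmaj : IntegrableOn (fun x : ℝ => 6 / b ^ 3 * x ^ (-2:ℝ)) (Ioi 1) :=
      (integrableOn_Ioi_rpow_of_lt (by norm_num) one_pos).const_mul _
    apply Integrable.mono hmaj ((gg_cont b).aestronglyMeasurable.restrict)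
    filter_upwards [ae_restrict_mem measurableSet_Ioi] with x hx
    have hx1 : (1:ℝ) ≤ x := le_of_lt hx
    have hx0 : (0:ℝ) < x := lt_of_lt_of_le one_pos hx1
    have hy : 0 < b * x ^ ((2:ℝ)/3) := by positivity
    have key := Real.pow_div_factorial_le_exp (hx := hy.le) (n := 3)
    have hxp : (x ^ ((2:ℝ)/3)) ^ (3:ℕ) = x ^ (2:ℝ) := by
      rw [← Real.rpow_natCast (x ^ ((2:ℝ)/3)) 3, ← Real.rpow_mul hx0.le]
      norm_num
    have h6 : b ^ 3 * x ^ (2:ℝ) / 6 ≤ Real.exp (b * x ^ ((2:ℝ)/3)) := by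
      calc b ^ 3 * x ^ (2:ℝ) / 6 = (b * x ^ ((2:ℝ)/3)) ^ (3:ℕ) / (Nat.factorial 3 : ℝ) := by
            rw [mul_pow, hxp]; norm_num [Nat.factorial]
        _ ≤ _ := key
    have h7 : (0:ℝ) < b ^ 3 * x ^ (2:ℝ) / 6 := by positivity
    have hinv : gg b x ≤ (b ^ 3 * x ^ (2:ℝ) / 6)⁻¹ := by
      rw [gg, Real.exp_neg]
      exact inv_anti₀ h7 h6
    rw [Real.norm_eq_abs, abs_of_nonneg (gg_nonneg b x), Real.norm_eq_abs,
      abs_of_nonneg (by positivity)]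
    apply hinv.trans
    rw [Real.rpow_neg hx0.le]
    have hb0 : b ≠ 0 := hb.ne'
    have hx2 : x ^ (2:ℝ) ≠ 0 := by positivity
    have heq : (b ^ 3 * x ^ (2:ℝ) / 6)⁻¹ = 6 / b ^ 3 * (x ^ (2:ℝ))⁻¹ := by
      field_simp
    exact le_of_eq heq
  have h3 := h1.union h2
  apply h3.mono_set
  intro x hx
  rcases le_or_gt x 1 with h | h
  · exact Or.inl ⟨hx, h⟩
  · exact Or.inr h

lemma gg_integral {b : ℝ} (hb : 0 < b) :
    ∫ x in Ioi (0:ℝ), gg b x = b ^ (-(3:ℝ)/2) * Real.Gamma (5/2) := by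
  have := integral_exp_neg_mul_rpow (p := (2:ℝ)/3) (b := b) (by norm_num) hb
  simp only [neg_mul] at this
  simp only [gg]
  rw [this]
  norm_num

lemma gg_step_le {b : ℝ} (hb : 0 < b) {a : ℝ} (ha : 0 ≤ a) :
    gg b (a + 1) ≤ ∫ x in a..(a+1), gg b x := by
  have h : ∫ x in a..(a+1), gg b (a+1) = gg b (a+1) := by simp
  rw [← h]
  apply intervalIntegral.integral_mono_on (by linarith) intervalIntegrable_const
    ((gg_cont b).intervalIntegrable _ _)
  intro x hx
  exact gg_anti hb (le_trans ha hx.1) (by simp; linarith [hx.2]) hx.2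

lemma gg_step_ge {b : ℝ} (hb : 0 < b) {a : ℝ} (ha : 0 ≤ a) :
    ∫ x in a..(a+1), gg b x ≤ gg b a := by
  have h : ∫ x in a..(a+1), gg b a = gg b a := by simp
  rw [← h]
  apply intervalIntegral.integral_mono_on (by linarith)
    ((gg_cont b).intervalIntegrable _ _) intervalIntegrable_const
  intro x hx
  exact gg_anti hb ha (le_trans ha hx.1) hx.1

lemma gg_partial_integral {b r : ℝ} (n : ℕ) :
    ∑ i ∈ Finset.range n, ∫ x in (r+i)..(r+i+1), gg b x = ∫ x in r..(r+n), gg b x := by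
  have := intervalIntegral.sum_integral_adjacent_intervals
    (a := fun i : ℕ => r + i) (μ := MeasureTheory.volume) (f := gg b) (n := n)
    (fun k _ => (gg_cont b).intervalIntegrable _ _)
  simp only [Nat.cast_zero, add_zero] at this
  rw [← this]
  apply Finset.sum_congr rfl
  intro i _
  congr 1
  push_cast
  ring

lemma gg_sum_le {b r : ℝ} (hb : 0 < b) (hr0 : 0 < r) (hr1 : r ≤ 1) (n : ℕ) :
    ∑ k ∈ Finset.range n, gg b (r + k) ≤ 1 + ∫ x in Ioi (0:ℝ), gg b x := by
  have hint : (0:ℝ) ≤ ∫ x in Ioi (0:ℝ), gg b x :=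
    setIntegral_nonneg measurableSet_Ioi (fun x _ => gg_nonneg b x)
  cases n with
  | zero => simpa using by linarith
  | succ m =>
    rw [Finset.sum_range_succ']
    have h0 : gg b (r + (0:ℕ)) ≤ 1 := by
      simpa using gg_le_one hb.le (by linarith)
    have hterm : ∀ i : ℕ, gg b (r + (i+1:ℕ)) ≤ ∫ x in (r+i)..(r+i+1), gg b x := by
      intro i
      have := gg_step_le hb (a := r + i) (by positivity)
      convert this using 2
      push_cast; ring
    have hsum : ∑ i ∈ Finset.range m, gg b (r + (i+1:ℕ)) ≤ ∫ x in r..(r+m), gg b x := by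
      rw [← gg_partial_integral m]
      exact Finset.sum_le_sum (fun i _ => hterm i)
    have hset : ∫ x in r..(r+m), gg b x ≤ ∫ x in Ioi (0:ℝ), gg b x := by
      rw [intervalIntegral.integral_of_le (le_add_of_nonneg_right (Nat.cast_nonneg m))]
      apply setIntegral_mono_set (gg_integrable hb)
      · filter_upwards with x using gg_nonneg b x
      · filter_upwards with x hx using lt_trans hr0 hx.1
    linarith

lemma gg_summable {b r : ℝ} (hb : 0 < b) (hr0 : 0 < r) (hr1 : r ≤ 1) :
    Summable (fun k : ℕ => gg b (r + k)) :=
  summable_of_sum_range_le (fun k => gg_nonneg b _) (gg_sum_le hb hr0 hr1)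

lemma gg_tsum_le {b r : ℝ} (hb : 0 < b) (hr0 : 0 < r) (hr1 : r ≤ 1) :
    ∑' k : ℕ, gg b (r + k) ≤ 1 + ∫ x in Ioi (0:ℝ), gg b x :=
  tsum_le_of_sum_range_le (fun k => gg_nonneg b _) (gg_sum_le hb hr0 hr1)

lemma gg_le_tsum {b r : ℝ} (hb : 0 < b) (hr0 : 0 < r) (hr1 : r ≤ 1) :
    ∫ x in Ioi (0:ℝ), gg b x ≤ 1 + ∑' k : ℕ, gg b (r + k) := by
  -- split Ioi 0 = Ioc 0 r ∪ Ioi r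
  have hsplit : ∫ x in Ioi (0:ℝ), gg b x
      = (∫ x in Ioc (0:ℝ) r, gg b x) + ∫ x in Ioi r, gg b x := by
    rw [← setIntegral_union]
    · congr 1
      rw [Ioc_union_Ioi_eq_Ioi hr0.le]
    · rw [Set.disjoint_left]; intro x hx hx'; exact absurd hx.2 (not_le.2 hx')
    · exact measurableSet_Ioi
    · exact (gg_integrable hb).mono_set Ioc_subset_Ioi_self
    · exact (gg_integrable hb).mono_set (Ioi_subset_Ioi hr0.le)
  have h1 : ∫ x in Ioc (0:ℝ) r, gg b x ≤ 1 := by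
    have : ∫ x in Ioc (0:ℝ) r, gg b x ≤ ∫ _ in Ioc (0:ℝ) r, (1:ℝ) := by
      apply setIntegral_mono_on ((gg_integrable hb).mono_set Ioc_subset_Ioi_self)
        (integrableOn_const (by simp))
        measurableSet_Ioc
      intro x hx
      exact gg_le_one hb.le hx.1.le
    simpa [hr0.le] using this.trans (by simp [hr0.le]; linarith)
  have h2 : ∫ x in Ioi r, gg b x ≤ ∑' k : ℕ, gg b (r + k) := by
    have hmono : Monotone (fun n : ℕ => Ioc r (r + n)) := by
      intro m n hmn
      apply Ioc_subset_Ioc le_rfl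
      have : (m:ℝ) ≤ n := Nat.cast_le.2 hmn
      linarith
    have hU : ⋃ n : ℕ, Ioc r (r + (n:ℝ)) = Ioi r := by
      ext x
      simp only [mem_iUnion, mem_Ioc, mem_Ioi]
      constructor
      · rintro ⟨n, h, _⟩; exact h
      · intro h
        obtain ⟨n, hn⟩ := exists_nat_ge (x - r)
        exact ⟨n, h, by linarith⟩
    have htend := MeasureTheory.tendsto_setIntegral_of_monotone
      (fun n : ℕ => measurableSet_Ioc) hmono
      (by rw [hU]; exact (gg_integrable hb).mono_set (Ioi_subset_Ioi hr0.le))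
    rw [← hU] at *
    apply le_of_tendsto htend
    filter_upwards with n
    calc ∫ x in Ioc r (r + (n:ℝ)), gg b x
        = ∫ x in r..(r+n), gg b x := by
          rw [intervalIntegral.integral_of_le (le_add_of_nonneg_right (Nat.cast_nonneg n))]
      _ = ∑ i ∈ Finset.range n, ∫ x in (r+i)..(r+i+1), gg b x := (gg_partial_integral n).symm
      _ ≤ ∑ i ∈ Finset.range n, gg b (r + i) :=
          Finset.sum_le_sum (fun i _ => gg_step_ge hb (by positivity))
      _ ≤ ∑' k : ℕ, gg b (r + k) :=
          Summable.sum_le_tsum _ (fun i _ => gg_nonneg b _) (gg_summable hb hr0 hr1)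
  linarith

lemma gg_key {β r : ℝ} (hβ : 0 < β) (hr0 : 0 < r) (hr1 : r ≤ 1) :
    Tendsto (fun t : ℝ => t ^ ((3:ℝ)/2) * ∑' k : ℕ, gg (β * t) (r + k))
      (nhdsWithin 0 (Ioi 0)) (nhds (β ^ (-(3:ℝ)/2) * Real.Gamma (5/2))) := by
  set L : ℝ := β ^ (-(3:ℝ)/2) * Real.Gamma (5/2) with hL
  have hbound : ∀ t : ℝ, t ∈ Ioi (0:ℝ) →
      |t ^ ((3:ℝ)/2) * ∑' k : ℕ, gg (β * t) (r + k) - L| ≤ t ^ ((3:ℝ)/2) := by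
    intro t ht
    have ht : (0:ℝ) < t := ht
    have hb : 0 < β * t := mul_pos hβ ht
    have hIeq : t ^ ((3:ℝ)/2) * ∫ x in Ioi (0:ℝ), gg (β * t) x = L := by
      rw [gg_integral hb, Real.mul_rpow hβ.le ht.le, hL]
      rw [show t ^ ((3:ℝ)/2) * (β ^ (-(3:ℝ)/2) * t ^ (-(3:ℝ)/2) * Real.Gamma (5/2))
        = (t ^ ((3:ℝ)/2) * t ^ (-(3:ℝ)/2)) * (β ^ (-(3:ℝ)/2) * Real.Gamma (5/2)) by ring,
        ← Real.rpow_add ht]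
      norm_num
    have h1 := gg_tsum_le hb hr0 hr1
    have h2 := gg_le_tsum hb hr0 hr1
    have htp : (0:ℝ) < t ^ ((3:ℝ)/2) := Real.rpow_pos_of_pos ht _
    rw [abs_sub_le_iff]
    constructor
    · calc t ^ ((3:ℝ)/2) * ∑' k : ℕ, gg (β * t) (r + k) - L
          = t ^ ((3:ℝ)/2) * ((∑' k : ℕ, gg (β * t) (r + k)) - ∫ x in Ioi (0:ℝ), gg (β*t) x) := by
            rw [← hIeq]; ring
        _ ≤ t ^ ((3:ℝ)/2) * 1 := by
            apply mul_le_mul_of_nonneg_left (by linarith) htp.le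
        _ = t ^ ((3:ℝ)/2) := mul_one _
    · calc L - t ^ ((3:ℝ)/2) * ∑' k : ℕ, gg (β * t) (r + k)
          = t ^ ((3:ℝ)/2) * ((∫ x in Ioi (0:ℝ), gg (β*t) x) - ∑' k : ℕ, gg (β * t) (r + k)) := by
            rw [← hIeq]; ring
        _ ≤ t ^ ((3:ℝ)/2) * 1 := by
            apply mul_le_mul_of_nonneg_left (by linarith) htp.le
        _ = t ^ ((3:ℝ)/2) := mul_one _
  have hpow : Tendsto (fun t : ℝ => t ^ ((3:ℝ)/2)) (nhdsWithin 0 (Ioi 0)) (nhds 0) := by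
    have : ContinuousAt (fun t : ℝ => t ^ ((3:ℝ)/2)) 0 :=
      Real.continuousAt_rpow_const 0 _ (Or.inr (by norm_num))
    have h0 : (0:ℝ) ^ ((3:ℝ)/2) = 0 := Real.zero_rpow (by norm_num)
    simpa [h0] using this.continuousWithinAt.tendsto
  have hdiff : Tendsto (fun t : ℝ => t ^ ((3:ℝ)/2) * (∑' k : ℕ, gg (β * t) (r + k)) - L)
      (nhdsWithin 0 (Ioi 0)) (nhds 0) := by
    apply squeeze_zero_norm' _ hpow
    filter_upwards [self_mem_nhdsWithin] with t ht
    simpa using hbound t ht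
  have := hdiff.add (tendsto_const_nhds (x := L))
  simpa using this

set_option maxHeartbeats 1600000 in
lemma key_perturbed {β r : ℝ} (hβ : 0 < β) (hr0 : 0 < r) (hr1 : r ≤ 1)
    (w : ℕ → ℝ) (hw : Tendsto w atTop (nhds 0))
    (hS : ∀ t > 0, Summable (fun k : ℕ =>
      Real.exp (-(β * ((r : ℝ) + k) ^ ((2:ℝ)/3) * (1 + w k)) * t))) :
    Tendsto (fun t : ℝ => t ^ ((3:ℝ)/2) * ∑' k : ℕ,
        Real.exp (-(β * ((r : ℝ) + k) ^ ((2:ℝ)/3) * (1 + w k)) * t))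
      (nhdsWithin 0 (Ioi 0)) (nhds (β ^ (-(3:ℝ)/2) * Real.Gamma (5/2))) := by
  set L : ℝ → ℝ := fun s => (β * s) ^ (-(3:ℝ)/2) * Real.Gamma (5/2) with hLdef
  have hL1 : L 1 = β ^ (-(3:ℝ)/2) * Real.Gamma (5/2) := by simp [hLdef]
  rw [Metric.tendsto_nhds]
  intro εp hεp
  -- continuity of L at 1
  have hcont : Tendsto L (nhds 1) (nhds (L 1)) := by
    apply (ContinuousAt.tendsto ?_)
    apply ContinuousAt.mul ?_ continuousAt_const
    exact (Real.continuousAt_rpow_const _ _ (Or.inl (by positivity))).comp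
      (continuousAt_const.mul continuousAt_id)
  obtain ⟨η₀, hη₀, hη₀'⟩ := Metric.eventually_nhds_iff.1
    (hcont.eventually (Metric.ball_mem_nhds (L 1) (by positivity : (0:ℝ) < εp/4)))
  set η : ℝ := min (η₀/2) (1/2) with hη
  have hηpos : 0 < η := by positivity
  have hηlt : η < 1 := lt_of_le_of_lt (min_le_right _ _) (by norm_num)
  have hηq : ∀ s : ℝ, |s - 1| ≤ η → dist (L s) (L 1) < εp/4 := by
    intro s hs
    apply hη₀'
    rw [Real.dist_eq]
    calc |s - 1| ≤ η := hs
      _ ≤ η₀/2 := min_le_left _ _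
      _ < η₀ := by linarith
  -- N from hw
  obtain ⟨N, hN⟩ := (Metric.tendsto_atTop.1 hw η hηpos)
  have hwb : ∀ k, N ≤ k → |w k| < η := by
    intro k hk
    simpa [Real.dist_eq] using hN k hk
  -- constants
  set Hc : ℝ := (∑ k ∈ Finset.range N, Real.exp (β * ((r:ℝ) + k) ^ ((2:ℝ)/3) * |1 + w k|))
    + N with hHc
  have hHcpos : 0 < Hc + 1 := by
    have : 0 ≤ Hc := by
      apply add_nonneg _ (Nat.cast_nonneg N)
      exact Finset.sum_nonneg (fun k _ => (Real.exp_pos _).le)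
    linarith
  have hβ1 : 0 < β * (1 - η) := by
    apply mul_pos hβ; linarith
  have hβ2 : 0 < β * (1 + η) := by
    apply mul_pos hβ; linarith
  -- limits for the scaled sums
  have hup := gg_key hβ1 hr0 hr1
  have hdn := gg_key hβ2 hr0 hr1
  have hupd := (Metric.tendsto_nhds.1 hup) (εp/4) (by positivity)
  have hdnd := (Metric.tendsto_nhds.1 hdn) (εp/4) (by positivity)
  have hpow0 : Tendsto (fun t : ℝ => t ^ ((3:ℝ)/2) * (Hc + 1)) (nhdsWithin 0 (Ioi 0)) (nhds 0) := by
    have : ContinuousAt (fun t : ℝ => t ^ ((3:ℝ)/2)) 0 :=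
      Real.continuousAt_rpow_const 0 _ (Or.inr (by norm_num))
    have h0 : (0:ℝ) ^ ((3:ℝ)/2) = 0 := Real.zero_rpow (by norm_num)
    have := (this.continuousWithinAt.tendsto (s := Ioi 0)).mul_const (Hc + 1)
    simpa [h0] using this
  have hpowd := (Metric.tendsto_nhds.1 hpow0) (εp/4) (by positivity)
  filter_upwards [self_mem_nhdsWithin, Ioo_mem_nhdsGT one_pos, hupd, hdnd, hpowd]
    with t ht ht1 hU hD hP
  have ht : (0:ℝ) < t := ht
  have ht1 : t < 1 := ht1.2
  have htp : (0:ℝ) < t ^ ((3:ℝ)/2) := Real.rpow_pos_of_pos ht _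
  set f : ℕ → ℝ := fun k => Real.exp (-(β * ((r:ℝ) + k) ^ ((2:ℝ)/3) * (1 + w k)) * t) with hfdef
  have hfS : Summable f := hS t ht
  have hfnn : ∀ k, 0 ≤ f k := fun k => (Real.exp_pos _).le
  -- head bound
  have hhead : ∑ k ∈ Finset.range N, f k
      ≤ ∑ k ∈ Finset.range N, Real.exp (β * ((r:ℝ) + k) ^ ((2:ℝ)/3) * |1 + w k|) := by
    apply Finset.sum_le_sum
    intro k _
    apply Real.exp_le_exp.2
    have h1 : -(β * ((r:ℝ) + k) ^ ((2:ℝ)/3) * (1 + w k)) * t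
        ≤ |β * ((r:ℝ) + k) ^ ((2:ℝ)/3) * (1 + w k)| * t := by
      apply mul_le_mul_of_nonneg_right (neg_le_abs _) ht.le
    apply h1.trans
    rw [abs_mul, abs_of_nonneg (by positivity : (0:ℝ) ≤ β * ((r:ℝ)+k) ^ ((2:ℝ)/3))]
    calc β * ((r:ℝ)+k) ^ ((2:ℝ)/3) * |1 + w k| * t
        ≤ β * ((r:ℝ)+k) ^ ((2:ℝ)/3) * |1 + w k| * 1 := by
          apply mul_le_mul_of_nonneg_left ht1.le (by positivity)
      _ = β * ((r:ℝ)+k) ^ ((2:ℝ)/3) * |1 + w k| := mul_one _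
  -- tail comparisons
  have htail_g1 : Summable (fun k : ℕ => gg (β * (1-η) * t) (r + k)) :=
    gg_summable (mul_pos hβ1 ht) hr0 hr1
  have htail_g2 : Summable (fun k : ℕ => gg (β * (1+η) * t) (r + k)) :=
    gg_summable (mul_pos hβ2 ht) hr0 hr1
  have hfS' : Summable (fun k : ℕ => f (k + N)) := (summable_nat_add_iff N).2 hfS
  have hg2S' : Summable (fun k : ℕ => gg (β * (1+η) * t) (r + (k + N : ℕ))) := by
    have := (summable_nat_add_iff (f := fun k : ℕ => gg (β * (1+η) * t) (r + k)) N).2 htail_g2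
    first
    | exact this
    | (convert this using 2 with k
       all_goals (push_cast; ring_nf))
  have hterm_up : ∀ k : ℕ, f (k + N) ≤ gg (β * (1-η) * t) (r + (k + N : ℕ)) := by
    intro k
    have hwk := hwb (k + N) (Nat.le_add_left N k)
    have habs := abs_le.1 hwk.le
    apply Real.exp_le_exp.2
    rw [neg_mul, neg_le_neg_iff]
    have hrk : (0:ℝ) ≤ ((r:ℝ) + (k + N : ℕ)) ^ ((2:ℝ)/3) := by positivity
    calc β * (1-η) * t * ((r:ℝ) + (k + N:ℕ)) ^ ((2:ℝ)/3)
        = β * ((r:ℝ) + (k + N:ℕ)) ^ ((2:ℝ)/3) * (1-η) * t := by ring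
      _ ≤ β * ((r:ℝ) + (k + N:ℕ)) ^ ((2:ℝ)/3) * (1 + w (k+N)) * t := by
          apply mul_le_mul_of_nonneg_right _ ht.le
          apply mul_le_mul_of_nonneg_left (by linarith [habs.1]) (by positivity)
  have hterm_dn : ∀ k : ℕ, gg (β * (1+η) * t) (r + (k + N : ℕ)) ≤ f (k + N) := by
    intro k
    have hwk := hwb (k + N) (Nat.le_add_left N k)
    have habs := abs_le.1 hwk.le
    apply Real.exp_le_exp.2
    rw [neg_mul, neg_le_neg_iff]
    calc β * ((r:ℝ) + (k + N:ℕ)) ^ ((2:ℝ)/3) * (1 + w (k+N)) * t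
        ≤ β * ((r:ℝ) + (k + N:ℕ)) ^ ((2:ℝ)/3) * (1+η) * t := by
          apply mul_le_mul_of_nonneg_right _ ht.le
          apply mul_le_mul_of_nonneg_left (by linarith [habs.2]) (by positivity)
      _ = β * (1+η) * t * ((r:ℝ) + (k + N:ℕ)) ^ ((2:ℝ)/3) := by ring
  -- decompose tsum f
  have hdecomp : ∑' k, f k = (∑ k ∈ Finset.range N, f k) + ∑' k, f (k + N) :=
    (Summable.sum_add_tsum_nat_add (f := f) N hfS).symm
  -- upper bound on tsum f
  have htsum_up : ∑' k, f k ≤ Hc + ∑' k : ℕ, gg (β * (1-η) * t) (r + k) := by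
    rw [hdecomp, hHc]
    have h1 : ∑' k, f (k + N) ≤ ∑' k : ℕ, gg (β * (1-η) * t) (r + (k + N : ℕ)) := by
      apply Summable.tsum_le_tsum hterm_up hfS'
      have := (summable_nat_add_iff (f := fun k : ℕ => gg (β * (1-η) * t) (r + k)) N).2 htail_g1
      first
      | exact this
      | (convert this using 2 with k
         all_goals (push_cast; ring_nf))
    have h2 : ∑' k : ℕ, gg (β * (1-η) * t) (r + (k + N : ℕ))
        ≤ ∑' k : ℕ, gg (β * (1-η) * t) (r + k) := by
      have heq := Summable.sum_add_tsum_nat_add (f := fun k : ℕ => gg (β * (1-η) * t) (r + k)) N htail_g1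
      have h3 : ∑' k : ℕ, gg (β * (1-η) * t) (r + (k + N : ℕ))
          = ∑' k : ℕ, gg (β * (1-η) * t) (r + (k + N)) := by
        congr 1 with k
        push_cast; ring_nf
      rw [h3, ← heq]
      have : 0 ≤ ∑ i ∈ Finset.range N, gg (β * (1-η) * t) (r + i) :=
        Finset.sum_nonneg (fun i _ => gg_nonneg _ _)
      linarith
    have hN0 : (0:ℝ) ≤ (N:ℝ) := Nat.cast_nonneg N
    linarith [h1.trans h2, hhead]
  -- lower bound on tsum f
  have htsum_dn : (∑' k : ℕ, gg (β * (1+η) * t) (r + k)) - N ≤ ∑' k, f k := by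
    have heq := Summable.sum_add_tsum_nat_add (f := fun k : ℕ => gg (β * (1+η) * t) (r + k)) N htail_g2
    have h1 : ∑' k : ℕ, gg (β * (1+η) * t) (r + (k + N : ℕ)) ≤ ∑' k, f (k + N) :=
      Summable.tsum_le_tsum hterm_dn hg2S' hfS'
    have hheadg : ∑ i ∈ Finset.range N, gg (β * (1+η) * t) (r + i) ≤ N := by
      calc ∑ i ∈ Finset.range N, gg (β * (1+η) * t) (r + i)
          ≤ ∑ i ∈ Finset.range N, (1:ℝ) := by
            apply Finset.sum_le_sum
            intro i _
            exact gg_le_one (mul_pos hβ2 ht).le (by positivity)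
        _ = N := by simp
    have h3 : ∑' k : ℕ, gg (β * (1+η) * t) (r + (k + N : ℕ))
        = ∑' k : ℕ, gg (β * (1+η) * t) (r + (k + N)) := by
      congr 1 with k
      push_cast; ring_nf
    have hheadf : 0 ≤ ∑ k ∈ Finset.range N, f k := Finset.sum_nonneg (fun k _ => hfnn k)
    rw [hdecomp]
    have h4 : ∑' k : ℕ, gg (β * (1+η) * t) (r + (k + N : ℕ)) ≤ ∑' k, f (k + N) := h1
    linarith [heq, h4, hheadg, hheadf]
  -- combine
  rw [Real.dist_eq, abs_sub_lt_iff]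
  have hUd : |t ^ ((3:ℝ)/2) * ∑' k : ℕ, gg (β * (1-η) * t) (r + k) - L (1-η)| < εp/4 := by
    rw [Real.dist_eq] at hU; exact hU
  have hDd : |t ^ ((3:ℝ)/2) * ∑' k : ℕ, gg (β * (1+η) * t) (r + k) - L (1+η)| < εp/4 := by
    rw [Real.dist_eq] at hD; exact hD
  have hPd : t ^ ((3:ℝ)/2) * (Hc + 1) < εp/4 := by
    have := hP
    rw [Real.dist_eq, sub_zero, abs_of_nonneg (by positivity)] at this
    exact this
  have hLup : |L (1-η) - L 1| < εp/4 := by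
    have := hηq (1-η) (by rw [show (1-η)-1 = -η by ring, abs_neg, abs_of_nonneg hηpos.le])
    rwa [Real.dist_eq] at this
  have hLdn : |L (1+η) - L 1| < εp/4 := by
    have := hηq (1+η) (by rw [show (1+η)-1 = η by ring, abs_of_nonneg hηpos.le])
    rwa [Real.dist_eq] at this
  have habs1 := abs_sub_lt_iff.1 hUd
  have habs2 := abs_sub_lt_iff.1 hDd
  have habs3 := abs_sub_lt_iff.1 hLup
  have habs4 := abs_sub_lt_iff.1 hLdn
  have hmul_up : t ^ ((3:ℝ)/2) * ∑' k, f k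
      ≤ t ^ ((3:ℝ)/2) * Hc + t ^ ((3:ℝ)/2) * ∑' k : ℕ, gg (β * (1-η) * t) (r + k) := by
    rw [← mul_add]
    exact mul_le_mul_of_nonneg_left htsum_up htp.le
  have hmul_dn : t ^ ((3:ℝ)/2) * (∑' k : ℕ, gg (β * (1+η) * t) (r + k)) - t ^ ((3:ℝ)/2) * (N:ℝ)
      ≤ t ^ ((3:ℝ)/2) * ∑' k, f k := by
    rw [← mul_sub]
    exact mul_le_mul_of_nonneg_left htsum_dn htp.le
  rw [mul_add, mul_one] at hPd
  have hsmall1 : t ^ ((3:ℝ)/2) * Hc < εp/4 := by linarith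
  have hsmall2 : t ^ ((3:ℝ)/2) * (N:ℝ) ≤ t ^ ((3:ℝ)/2) * Hc := by
    apply mul_le_mul_of_nonneg_left _ htp.le
    rw [hHc]
    have : 0 ≤ ∑ k ∈ Finset.range N, Real.exp (β * ((r:ℝ) + k) ^ ((2:ℝ)/3) * |1 + w k|) :=
      Finset.sum_nonneg (fun k _ => (Real.exp_pos _).le)
    linarith
  rw [hL1] at habs3 habs4
  constructor
  · linarith [hmul_up, habs1.1, habs3.1, hsmall1]
  · linarith [hmul_dn, habs2.2, habs4.2, hsmall1, hsmall2]

set_option maxHeartbeats 800000 in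
theorem trace_asymptotics (lam ε δ : ℕ → ℝ)
    (hpos : ∀ n ≥ 1, 0 < lam n)
    (hε : Filter.Tendsto ε atTop (nhds 0))
    (hδ : Filter.Tendsto δ atTop (nhds 0))
    (hodd : ∀ k ≥ 1, lam (2 * k - 1) =
      (3 * π / 2) ^ ((2 : ℝ) / 3) * ((k : ℝ) - 3 / 4) ^ ((2 : ℝ) / 3) * (1 + ε k))
    (heven : ∀ k ≥ 1, lam (2 * k) =
      (3 * π / 2) ^ ((2 : ℝ) / 3) * ((k : ℝ) - 1 / 4) ^ ((2 : ℝ) / 3) * (1 + δ k))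
    (hsum : ∀ t > 0, Summable (fun n : ℕ => Real.exp (-lam (n + 1) * t))) :
    Filter.Tendsto (fun t : ℝ => t ^ ((3 : ℝ) / 2) * ∑' n : ℕ, Real.exp (-lam (n + 1) * t))
      (nhdsWithin 0 (Ioi 0)) (nhds (1 / Real.sqrt π)) := by
  have hπ : (0:ℝ) < 3 * π / 2 := by positivity
  set c : ℝ := (3 * π / 2) ^ ((2:ℝ)/3) with hc
  have hcpos : 0 < c := Real.rpow_pos_of_pos hπ _
  set u : ℝ → ℕ → ℝ := fun t n => Real.exp (-lam (n + 1) * t) with hu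
  have hinj2 : Function.Injective (fun k : ℕ => 2 * k) := fun a b h => by
    simpa using h
  have hinj2' : Function.Injective (fun k : ℕ => 2 * k + 1) := fun a b h => by
    simp only [] at h
    omega
  have hA : ∀ (t : ℝ) (k : ℕ), u t (2*k)
      = Real.exp (-(c * ((1/4 : ℝ) + k) ^ ((2:ℝ)/3) * (1 + ε (k+1))) * t) := by
    intro t k
    have h := hodd (k+1) (Nat.le_add_left 1 k)
    have h2 : 2*(k+1)-1 = 2*k+1 := by omega
    rw [h2] at h
    have h3 : ((k+1:ℕ):ℝ) - 3/4 = 1/4 + (k:ℝ) := by push_cast; ring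
    rw [h3] at h
    show Real.exp (-lam (2*k + 1) * t) = _
    rw [h, hc]
  have hB : ∀ (t : ℝ) (k : ℕ), u t (2*k+1)
      = Real.exp (-(c * ((3/4 : ℝ) + k) ^ ((2:ℝ)/3) * (1 + δ (k+1))) * t) := by
    intro t k
    have h := heven (k+1) (Nat.le_add_left 1 k)
    have h2 : 2*(k+1) = 2*k+2 := by omega
    rw [h2] at h
    have h3 : ((k+1:ℕ):ℝ) - 1/4 = 3/4 + (k:ℝ) := by push_cast; ring
    rw [h3] at h
    show Real.exp (-lam (2*k + 1 + 1) * t) = _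
    rw [show 2*k+1+1 = 2*k+2 by omega, h, hc]
  have hS1 : ∀ t > 0, Summable (fun k : ℕ =>
      Real.exp (-(c * ((1/4 : ℝ) + k) ^ ((2:ℝ)/3) * (1 + ε (k+1))) * t)) := by
    intro t ht
    exact ((hsum t ht).comp_injective hinj2).congr (fun k => hA t k)
  have hS2 : ∀ t > 0, Summable (fun k : ℕ =>
      Real.exp (-(c * ((3/4 : ℝ) + k) ^ ((2:ℝ)/3) * (1 + δ (k+1))) * t)) := by
    intro t ht
    exact ((hsum t ht).comp_injective hinj2').congr (fun k => hB t k)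
  have hw1 : Tendsto (fun k : ℕ => ε (k+1)) atTop (nhds 0) :=
    hε.comp (tendsto_add_atTop_nat 1)
  have hw2 : Tendsto (fun k : ℕ => δ (k+1)) atTop (nhds 0) :=
    hδ.comp (tendsto_add_atTop_nat 1)
  have hT1 := key_perturbed hcpos (by norm_num : (0:ℝ) < 1/4) (by norm_num)
    (fun k => ε (k+1)) hw1 hS1
  have hT2 := key_perturbed hcpos (by norm_num : (0:ℝ) < 3/4) (by norm_num)
    (fun k => δ (k+1)) hw2 hS2
  have hadd := hT1.add hT2
  -- value computation
  have h1 : c ^ (-(3:ℝ)/2) = (3*π/2)⁻¹ := by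
    rw [hc, ← Real.rpow_mul hπ.le]
    norm_num [Real.rpow_neg_one]
  have h2 : Real.Gamma (5/2) = 3/4 * Real.sqrt π := by
    rw [show (5/2:ℝ) = 3/2 + 1 by norm_num, Real.Gamma_add_one (by norm_num),
      show (3/2:ℝ) = 1/2 + 1 by norm_num, Real.Gamma_add_one (by norm_num),
      Real.Gamma_one_half_eq]
    ring
  have hπ0 : (0:ℝ) < π := Real.pi_pos
  have hsp : 0 < Real.sqrt π := Real.sqrt_pos.2 hπ0
  have hs : Real.sqrt π * Real.sqrt π = π := Real.mul_self_sqrt hπ0.le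
  have hval : c ^ (-(3:ℝ)/2) * Real.Gamma (5/2) + c ^ (-(3:ℝ)/2) * Real.Gamma (5/2)
      = 1 / Real.sqrt π := by
    rw [h1, h2]
    field_simp
    nlinarith [hs]
  rw [hval] at hadd
  apply hadd.congr'
  filter_upwards [self_mem_nhdsWithin] with t ht
  have ht : (0:ℝ) < t := ht
  have hsplit : (∑' k : ℕ, u t (2*k)) + (∑' k : ℕ, u t (2*k+1)) = ∑' n : ℕ, u t n :=
    tsum_even_add_odd ((hsum t ht).comp_injective hinj2) ((hsum t ht).comp_injective hinj2')
  have e1 : ∑' k : ℕ, Real.exp (-(c * ((1/4 : ℝ) + k) ^ ((2:ℝ)/3) * (1 + ε (k+1))) * t)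
      = ∑' k : ℕ, u t (2*k) := by
    congr 1 with k
    rw [hA t k]
  have e2 : ∑' k : ℕ, Real.exp (-(c * ((3/4 : ℝ) + k) ^ ((2:ℝ)/3) * (1 + δ (k+1))) * t)
      = ∑' k : ℕ, u t (2*k+1) := by
    congr 1 with k
    rw [hB t k]
  show _ = t ^ ((3:ℝ)/2) * ∑' n : ℕ, u t n
  rw [e1, e2, ← hsplit]
  ring
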